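/- arXiv:1710.06030 — 4 statements merged into one kernel-verified Lean document; each statement's English description precedes it below -/
import Mathlib

section
/- Let x_1,…,x_n be i.i.d. N(0, I_d) random vectors in ℝ^d, let β* ∈ ℝ^d \ {0}, and for γ, δ > 0 define the event A_γ := { min_{i<j} (x_iᵀβ* − x_jᵀβ*)² ≤ γ² }. If ‖β*‖₂² > (n²(n−1)²/(4δ²π))·γ², then P(A_γ) < δ. -/
open MeasureTheory ProbabilityTheory Real NNReal ENNReal

noncomputable section

private lemma pdf_conv (v w : ℝ≥0) (hv : v ≠ 0) (hw : w ≠ 0) (a : ℝ) :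
    ∫ t, gaussianPDFReal 0 v t * gaussianPDFReal 0 w (a - t)
      = gaussianPDFReal 0 (v + w) a := by
  have hV : (0:ℝ) < v := by positivity
  have hW : (0:ℝ) < w := by positivity
  have hVW : (0:ℝ) < (v:ℝ) + w := by linarith
  simp only [gaussianPDFReal, NNReal.coe_add, sub_zero]
  set k : ℝ := ((v:ℝ) + w) / (2 * v * w) with hk
  have hkpos : 0 < k := by positivity
  set m : ℝ := (v:ℝ) * a / ((v:ℝ) + w) with hm
  have expeq : ∀ t : ℝ, Real.exp (- t^2 / (2 * v)) * Real.exp (- (a - t)^2 / (2 * w))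
      = Real.exp (- a^2 / (2 * ((v:ℝ) + w))) * Real.exp (- k * (t - m)^2) := by
    intro t
    rw [← Real.exp_add, ← Real.exp_add]
    congr 1
    rw [hk, hm]
    field_simp
    ring
  have key : ∀ t : ℝ,
      (Real.sqrt (2 * π * v))⁻¹ * Real.exp (- t^2 / (2 * v)) *
        ((Real.sqrt (2 * π * w))⁻¹ * Real.exp (- (a - t)^2 / (2 * w)))
      = ((Real.sqrt (2 * π * v))⁻¹ * (Real.sqrt (2 * π * w))⁻¹ *
          Real.exp (- a^2 / (2 * ((v:ℝ) + w)))) * Real.exp (- k * (t - m)^2) := by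
    intro t
    calc (Real.sqrt (2 * π * v))⁻¹ * Real.exp (- t^2 / (2 * v)) *
        ((Real.sqrt (2 * π * w))⁻¹ * Real.exp (- (a - t)^2 / (2 * w)))
        = (Real.sqrt (2 * π * v))⁻¹ * (Real.sqrt (2 * π * w))⁻¹ *
          (Real.exp (- t^2 / (2 * v)) * Real.exp (- (a - t)^2 / (2 * w))) := by ring
      _ = _ := by rw [expeq t]; ring
  rw [MeasureTheory.integral_congr_ae (Filter.Eventually.of_forall key),
    MeasureTheory.integral_const_mul]
  have hgauss : ∫ t : ℝ, Real.exp (- k * (t - m)^2) = Real.sqrt (π / k) := by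
    rw [← integral_gaussian k]
    exact MeasureTheory.integral_sub_right_eq_self (fun t => Real.exp (- k * t^2)) m
  rw [hgauss]
  have h1 : Real.sqrt (π / k) = Real.sqrt (2 * π * v) * Real.sqrt (2 * π * w) /
      Real.sqrt (2 * π * ((v:ℝ) + w)) := by
    rw [← Real.sqrt_mul (by positivity), ← Real.sqrt_div (by positivity)]
    congr 1
    rw [hk]
    field_simp
  rw [h1]
  have e1 : Real.sqrt (2 * π * v) ≠ 0 := by positivity
  have e2 : Real.sqrt (2 * π * w) ≠ 0 := by positivity
  have e3 : Real.sqrt (2 * π * ((v:ℝ) + w)) ≠ 0 := by positivity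
  field_simp

private lemma gaussianPDFReal_le' (μ : ℝ) (v : ℝ≥0) (x : ℝ) :
    gaussianPDFReal μ v x ≤ (Real.sqrt (2 * Real.pi * v))⁻¹ := by
  rw [gaussianPDFReal]
  have h1 : Real.exp (- (x - μ)^2 / (2 * v)) ≤ 1 := by
    rw [Real.exp_le_one_iff]
    apply div_nonpos_of_nonpos_of_nonneg
    · simp [sq_nonneg]
    · positivity
  calc (Real.sqrt (2 * Real.pi * v))⁻¹ * Real.exp (- (x - μ)^2 / (2 * v))
      ≤ (Real.sqrt (2 * Real.pi * v))⁻¹ * 1 := by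
        apply mul_le_mul_of_nonneg_left h1 (by positivity)
    _ = _ := mul_one _

private lemma gaussian_conv (v w : ℝ≥0) :
    Measure.map (fun p : ℝ × ℝ => p.1 + p.2) ((gaussianReal 0 v).prod (gaussianReal 0 w))
      = gaussianReal 0 (v + w) := by
  by_cases hv : v = 0
  · subst hv
    rw [gaussianReal_zero_var, zero_add, Measure.dirac_prod, Measure.map_map measurable_add
      (measurable_prodMk_left)]
    simp [Function.comp_def]
  by_cases hw : w = 0
  · subst hw
    rw [gaussianReal_zero_var, add_zero, Measure.prod_dirac, Measure.map_map measurable_add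
      (measurable_prodMk_right)]
    simp [Function.comp_def]
  have hvw : v + w ≠ 0 := by simp [hv, hw]
  ext s hs
  rw [Measure.map_apply measurable_add hs, Measure.prod_apply (measurable_add hs)]
  rw [gaussianReal_of_var_ne_zero 0 hv, gaussianReal_of_var_ne_zero 0 hw]
  have hmeasnu : Measurable fun x : ℝ =>
      (volume.withDensity (gaussianPDF 0 w)) (Prod.mk x ⁻¹' ((fun p : ℝ × ℝ => p.1 + p.2) ⁻¹' s)) :=
    measurable_measure_prodMk_left (measurable_add hs)
  rw [lintegral_withDensity_eq_lintegral_mul _ (measurable_gaussianPDF 0 v) hmeasnu]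
  have inner_eq : ∀ x : ℝ,
      (volume.withDensity (gaussianPDF 0 w)) (Prod.mk x ⁻¹' ((fun p : ℝ × ℝ => p.1 + p.2) ⁻¹' s))
      = ∫⁻ y in s, gaussianPDF 0 w (y - x) := by
    intro x
    have hpre : (Prod.mk x ⁻¹' ((fun p : ℝ × ℝ => p.1 + p.2) ⁻¹' s)) = (fun y => x + y) ⁻¹' s := rfl
    rw [hpre, withDensity_apply _ (measurable_const_add x hs)]
    have hmp : MeasurePreserving (fun y : ℝ => x + y) volume volume :=
      measurePreserving_add_left volume x
    have hemb : MeasurableEmbedding (fun y : ℝ => x + y) :=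
      (Homeomorph.addLeft x).measurableEmbedding
    have := hmp.setLIntegral_comp_preimage_emb hemb (fun y => gaussianPDF 0 w (y - x)) s
    simpa using this
  simp only [Pi.mul_apply, inner_eq]
  calc ∫⁻ x, gaussianPDF 0 v x * ∫⁻ y in s, gaussianPDF 0 w (y - x) ∂volume
      = ∫⁻ x, ∫⁻ y in s, gaussianPDF 0 v x * gaussianPDF 0 w (y - x) ∂volume := by
        congr 1; ext x
        exact (lintegral_const_mul _
          ((measurable_gaussianPDF 0 w).comp (measurable_id.sub_const x))).symm
    _ = ∫⁻ y in s, ∫⁻ x, gaussianPDF 0 v x * gaussianPDF 0 w (y - x) ∂volume := by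
        apply lintegral_lintegral_swap
        apply Measurable.aemeasurable
        exact ((measurable_gaussianPDF 0 v).comp measurable_fst).mul
          ((measurable_gaussianPDF 0 w).comp (measurable_snd.sub measurable_fst))
    _ = ∫⁻ y in s, gaussianPDF 0 (v + w) y := by
        apply setLIntegral_congr_fun hs
        intro y _
        have hint : Integrable (fun x => gaussianPDFReal 0 v x * gaussianPDFReal 0 w (y - x)) := by
          have hm : AEStronglyMeasurable (fun x : ℝ => gaussianPDFReal 0 w (y - x)) volume :=
            ((measurable_gaussianPDFReal 0 w).comp
              (measurable_const.sub measurable_id)).aestronglyMeasurable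
          have hb : ∀ x : ℝ, ‖gaussianPDFReal 0 w (y - x)‖ ≤ (Real.sqrt (2 * Real.pi * w))⁻¹ := by
            intro x
            rw [Real.norm_eq_abs, abs_of_nonneg (gaussianPDFReal_nonneg 0 w _)]
            exact gaussianPDFReal_le' 0 w _
          have h := Integrable.bdd_mul (integrable_gaussianPDFReal 0 v) hm (Filter.Eventually.of_forall hb)
          simpa [mul_comm] using h
        calc ∫⁻ x, gaussianPDF 0 v x * gaussianPDF 0 w (y - x) ∂volume
            = ∫⁻ x, ENNReal.ofReal (gaussianPDFReal 0 v x * gaussianPDFReal 0 w (y - x)) ∂volume := by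
              congr 1; ext x
              rw [gaussianPDF, gaussianPDF, ← ENNReal.ofReal_mul (gaussianPDFReal_nonneg 0 v x)]
          _ = ENNReal.ofReal (∫ x, gaussianPDFReal 0 v x * gaussianPDFReal 0 w (y - x)) := by
              rw [← ofReal_integral_eq_lintegral_ofReal hint]
              exact Filter.Eventually.of_forall fun x =>
                mul_nonneg (gaussianPDFReal_nonneg 0 v x) (gaussianPDFReal_nonneg 0 w _)
          _ = gaussianPDF 0 (v + w) y := by rw [pdf_conv v w hv hw y]; rfl
    _ = gaussianReal 0 (v + w) s := (gaussianReal_apply 0 hvw s).symm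

private lemma map_sum_pi_gaussian (m : ℕ) (v : Fin m → ℝ≥0) (c : Fin m → ℝ) :
    Measure.map (fun x : Fin m → ℝ => ∑ i, c i * x i)
        (Measure.pi fun i => gaussianReal 0 (v i))
      = gaussianReal 0 (∑ i, ‖c i‖₊ ^ 2 * v i) := by
  induction m with
  | zero =>
      have : (fun x : Fin 0 → ℝ => ∑ i, c i * x i) = fun _ => (0:ℝ) := by
        funext x; simp
      rw [this, Measure.map_const]
      simp
  | succ m ih =>
      have hmp := measurePreserving_piFinSuccAbove (fun i : Fin (m+1) => gaussianReal 0 (v i)) 0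
      set e := MeasurableEquiv.piFinSuccAbove (fun _ : Fin (m+1) => ℝ) 0 with he
      have hmeasf : Measurable (fun x : Fin (m+1) → ℝ => ∑ i, c i * x i) :=
        Finset.measurable_sum Finset.univ fun i _ => (measurable_pi_apply i).const_mul _
      have hpi : (Measure.pi fun i : Fin (m+1) => gaussianReal 0 (v i))
          = Measure.map e.symm (((gaussianReal 0 (v 0))).prod
              (Measure.pi fun j : Fin m => gaussianReal 0 (v (Fin.succ j)))) := by
        have h2 := (hmp.symm e).map_eq
        simp only [Fin.succAbove_zero] at h2 ⊢
        exact h2.symm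
      rw [hpi, Measure.map_map hmeasf e.symm.measurable]
      have hcomp : ((fun x : Fin (m+1) → ℝ => ∑ i, c i * x i) ∘ e.symm)
          = (fun q : ℝ × ℝ => q.1 + q.2) ∘
            (Prod.map (fun a : ℝ => c 0 * a) (fun y : Fin m → ℝ => ∑ j, c (Fin.succ j) * y j)) := by
        funext p
        obtain ⟨a, y⟩ := p
        simp only [Function.comp_apply, he, MeasurableEquiv.piFinSuccAbove_symm_apply,
          Prod.map_apply, Fin.insertNthEquiv_zero, Fin.consEquiv_apply]
        rw [Fin.sum_univ_succ]
        simp [Fin.cons_zero, Fin.cons_succ]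
      have hg1 : Measurable (fun a : ℝ => c 0 * a) := by fun_prop
      have hg2 : Measurable (fun y : Fin m → ℝ => ∑ j, c (Fin.succ j) * y j) :=
        Finset.measurable_sum Finset.univ fun j _ => (measurable_pi_apply j).const_mul _
      have hg : Measurable (Prod.map (fun a : ℝ => c 0 * a)
          (fun y : Fin m → ℝ => ∑ j, c (Fin.succ j) * y j)) := hg1.prodMap hg2
      rw [hcomp, ← Measure.map_map measurable_add hg,
        ← Measure.map_prod_map _ _ hg1 hg2,
        ih (fun j => v (Fin.succ j)) (fun j => c (Fin.succ j))]
      have hc0 : Measure.map (fun a : ℝ => c 0 * a) (gaussianReal 0 (v 0))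
          = gaussianReal 0 (‖c 0‖₊ ^ 2 * v 0) := by
        rw [gaussianReal_map_const_mul (μ := 0) (v := v 0) (c 0)]
        congr 2
        · ring
        · ext
          simp [NNReal.coe_pow, sq_abs]
      rw [hc0, gaussian_conv, Fin.sum_univ_succ]


def l2 {n : ℕ} (v : Fin n → ℝ) : ℝ := Real.sqrt (∑ i, v i ^ 2)

abbrev stdGaussian : Measure ℝ := gaussianReal 0 1

/-- law of `n` iid `N(0, I_d)` random vectors `x_1, …, x_n`. -/
abbrev μX (n d : ℕ) : Measure (Fin n → Fin d → ℝ) :=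
  Measure.pi fun _ => Measure.pi fun _ => stdGaussian

/-- **Lemma 7.**  Let `x_1, …, x_n` be iid `N(0, I_d)`, `β* ≠ 0`, and for `γ, δ > 0` let
`A_γ = {min_{i<j} (x_iᵀβ* - x_jᵀβ*)² ≤ γ²}`.
If `‖β*‖₂² > (n²(n-1)²/(4δ²π)) γ²` then `P(A_γ) < δ`. -/
theorem gap_event_upper (n d : ℕ) (βs : Fin d → ℝ) (hβ : βs ≠ 0) (γ δ : ℝ)
    (hγ : 0 < γ) (hδ : 0 < δ)
    (hsnr : l2 βs ^ 2 > ((n : ℝ) ^ 2 * ((n : ℝ) - 1) ^ 2 / (4 * δ ^ 2 * Real.pi)) * γ ^ 2) :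
    μX n d {x | ∃ i j : Fin n, i < j ∧
        ((∑ l, x i l * βs l) - ∑ l, x j l * βs l) ^ 2 ≤ γ ^ 2}
      < ENNReal.ofReal δ := by
  classical
  set V : ℝ≥0 := ∑ l, ‖βs l‖₊ ^ 2 * 1 with hV
  have hVs : (V : ℝ) = ∑ l, βs l ^ 2 := by
    rw [hV]
    push_cast
    refine Finset.sum_congr rfl fun l _ => ?_
    simp [sq_abs]
  have hspos : (0:ℝ) < ∑ l, βs l ^ 2 := by
    obtain ⟨l, hl⟩ := Function.ne_iff.mp hβ
    exact Finset.sum_pos' (fun l _ => sq_nonneg _)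
      ⟨l, Finset.mem_univ l, lt_of_le_of_ne (sq_nonneg _) (Ne.symm (pow_ne_zero 2 hl))⟩
  have hVne : V ≠ 0 := by
    intro h
    rw [h] at hVs
    simp at hVs
    linarith
  -- the law of each inner product
  have hg_meas : Measurable (fun y : Fin d → ℝ => ∑ l, y l * βs l) :=
    Finset.measurable_sum _ fun l _ => (measurable_pi_apply l).mul_const _
  have hg_law : Measure.map (fun y : Fin d → ℝ => ∑ l, y l * βs l)
      (Measure.pi fun _ : Fin d => stdGaussian) = gaussianReal 0 V := by
    rw [show (fun y : Fin d → ℝ => ∑ l, y l * βs l) = (fun y => ∑ l, βs l * y l) by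
      funext y; exact Finset.sum_congr rfl fun l _ => mul_comm _ _]
    exact map_sum_pi_gaussian d (fun _ => 1) βs
  have hG : MeasurePreserving (fun (x : Fin n → Fin d → ℝ) (i : Fin n) => ∑ l, x i l * βs l)
      (μX n d) (Measure.pi fun _ : Fin n => gaussianReal 0 V) :=
    measurePreserving_pi _ _ (fun _ => ⟨hg_meas, hg_law⟩)
  -- the law of the difference for a fixed pair i < j
  have hB : MeasurableSet {t : ℝ | t ^ 2 ≤ γ ^ 2} :=
    measurableSet_le ((continuous_pow 2).measurable) measurable_const
  set b : ℝ≥0∞ := ENNReal.ofReal (2 * γ * (Real.sqrt (2 * Real.pi * ((V:ℝ) + V)))⁻¹) with hb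
  have hpair : ∀ i j : Fin n, i < j →
      μX n d {x | ((∑ l, x i l * βs l) - ∑ l, x j l * βs l) ^ 2 ≤ γ ^ 2} ≤ b := by
    intro i j hij
    set cij : Fin n → ℝ := fun k => if k = i then 1 else if k = j then -1 else 0 with hcij
    have hfun : (fun y : Fin n → ℝ => ∑ k, cij k * y k) = fun y => y i - y j := by
      funext y
      have hptw : ∀ k : Fin n, cij k * y k
          = (if k = i then y k else 0) + (if k = j then -y k else 0) := by
        intro k
        rcases eq_or_ne k i with h1 | h1
        · subst h1
          simp [hcij, hij.ne]
        · rcases eq_or_ne k j with h2 | h2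
          · subst h2
            simp [hcij, h1]
          · simp [hcij, h1, h2]
      rw [Finset.sum_congr rfl fun k _ => hptw k, Finset.sum_add_distrib]
      rw [Finset.sum_ite_eq' Finset.univ i (fun k => y k),
        Finset.sum_ite_eq' Finset.univ j (fun k => -y k)]
      simp [sub_eq_add_neg]
    have hVV : (∑ k, ‖cij k‖₊ ^ 2 * V) = V + V := by
      have hptw : ∀ k : Fin n, ‖cij k‖₊ ^ 2 * V
          = (if k = i then V else 0) + (if k = j then V else 0) := by
        intro k
        rcases eq_or_ne k i with h1 | h1
        · subst h1
          simp [hcij, hij.ne]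
        · rcases eq_or_ne k j with h2 | h2
          · subst h2
            simp [hcij, h1]
          · simp [hcij, h1, h2]
      rw [Finset.sum_congr rfl fun k _ => hptw k, Finset.sum_add_distrib,
        Finset.sum_ite_eq' Finset.univ i (fun _ => V),
        Finset.sum_ite_eq' Finset.univ j (fun _ => V)]
      simp
    have hmapdiff : Measure.map
        (fun x : Fin n → Fin d → ℝ => (∑ l, x i l * βs l) - ∑ l, x j l * βs l) (μX n d)
        = gaussianReal 0 (V + V) := by
      have h1 : (fun x : Fin n → Fin d → ℝ => (∑ l, x i l * βs l) - ∑ l, x j l * βs l)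
          = (fun y : Fin n → ℝ => y i - y j) ∘ (fun x i => ∑ l, x i l * βs l) := rfl
      rw [h1, ← Measure.map_map (g := fun y : Fin n → ℝ => y i - y j) ((measurable_pi_apply i).sub (measurable_pi_apply j))
        hG.measurable, hG.map_eq, ← hfun, map_sum_pi_gaussian n (fun _ => V) cij, hVV]
    have hm1 : Measurable (fun x : Fin n → Fin d → ℝ => ∑ l, x i l * βs l) :=
      Finset.measurable_sum _ fun l _ =>
        (((measurable_pi_apply l).comp (measurable_pi_apply i)).mul_const _)
    have hm2 : Measurable (fun x : Fin n → Fin d → ℝ => ∑ l, x j l * βs l) :=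
      Finset.measurable_sum _ fun l _ =>
        (((measurable_pi_apply l).comp (measurable_pi_apply j)).mul_const _)
    have hmeasF : Measurable
        (fun x : Fin n → Fin d → ℝ => (∑ l, x i l * βs l) - ∑ l, x j l * βs l) := hm1.sub hm2
    have hVV2 : V + V ≠ 0 := by simp [hVne]
    have hEset : {x : Fin n → Fin d → ℝ | ((∑ l, x i l * βs l) - ∑ l, x j l * βs l) ^ 2 ≤ γ ^ 2}
        = (fun x : Fin n → Fin d → ℝ => (∑ l, x i l * βs l) - ∑ l, x j l * βs l) ⁻¹'
          {t : ℝ | t ^ 2 ≤ γ ^ 2} := rfl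
    rw [hEset, ← Measure.map_apply hmeasF hB, hmapdiff]
    have hsub : {t : ℝ | t ^ 2 ≤ γ ^ 2} ⊆ Set.Icc (-γ) γ := by
      intro t ht
      simp only [Set.mem_setOf_eq] at ht
      constructor <;> nlinarith
    calc gaussianReal 0 (V + V) {t : ℝ | t ^ 2 ≤ γ ^ 2}
        ≤ gaussianReal 0 (V + V) (Set.Icc (-γ) γ) := measure_mono hsub
      _ = ∫⁻ t in Set.Icc (-γ) γ, gaussianPDF 0 (V + V) t :=
          gaussianReal_apply 0 hVV2 _
      _ ≤ ∫⁻ _ in Set.Icc (-γ) γ,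
            ENNReal.ofReal ((Real.sqrt (2 * Real.pi * ((V:ℝ) + V)))⁻¹) := by
          apply lintegral_mono
          intro t
          apply ENNReal.ofReal_le_ofReal
          have := gaussianPDFReal_le' 0 (V + V) t
          simpa using this
      _ = ENNReal.ofReal ((Real.sqrt (2 * Real.pi * ((V:ℝ) + V)))⁻¹)
            * volume (Set.Icc (-γ) γ) := setLIntegral_const _ _
      _ = b := by
          rw [Real.volume_Icc, hb, ← ENNReal.ofReal_mul (by positivity)]
          congr 1
          ring
  -- union bound
  have hAeq : {x : Fin n → Fin d → ℝ | ∃ i j : Fin n, i < j ∧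
        ((∑ l, x i l * βs l) - ∑ l, x j l * βs l) ^ 2 ≤ γ ^ 2}
      = ⋃ i : Fin n, ⋃ j : Fin n, {x | i < j ∧
        ((∑ l, x i l * βs l) - ∑ l, x j l * βs l) ^ 2 ≤ γ ^ 2} := by
    simp only [Set.setOf_exists]
  have hbound : μX n d {x | ∃ i j : Fin n, i < j ∧
        ((∑ l, x i l * βs l) - ∑ l, x j l * βs l) ^ 2 ≤ γ ^ 2}
      ≤ ∑ i : Fin n, ∑ j : Fin n, (if i < j then b else 0) := by
    rw [hAeq]
    calc μX n d (⋃ i : Fin n, ⋃ j : Fin n, {x | i < j ∧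
          ((∑ l, x i l * βs l) - ∑ l, x j l * βs l) ^ 2 ≤ γ ^ 2})
        ≤ ∑' i : Fin n, μX n d (⋃ j : Fin n, {x | i < j ∧
          ((∑ l, x i l * βs l) - ∑ l, x j l * βs l) ^ 2 ≤ γ ^ 2}) := measure_iUnion_le _
      _ ≤ ∑' i : Fin n, ∑' j : Fin n, μX n d {x | i < j ∧
          ((∑ l, x i l * βs l) - ∑ l, x j l * βs l) ^ 2 ≤ γ ^ 2} :=
          ENNReal.tsum_le_tsum fun i => measure_iUnion_le _
      _ = ∑ i : Fin n, ∑ j : Fin n, μX n d {x | i < j ∧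
          ((∑ l, x i l * βs l) - ∑ l, x j l * βs l) ^ 2 ≤ γ ^ 2} := by
          rw [tsum_fintype]
          exact Finset.sum_congr rfl fun i _ => tsum_fintype _
      _ ≤ ∑ i : Fin n, ∑ j : Fin n, (if i < j then b else 0) := by
          refine Finset.sum_le_sum fun i _ => Finset.sum_le_sum fun j _ => ?_
          by_cases h : i < j
          · rw [if_pos h]
            refine le_trans (measure_mono fun x hx => hx.2) (hpair i j h)
          · rw [if_neg h]
            have he : {x : Fin n → Fin d → ℝ | i < j ∧
                ((∑ l, x i l * βs l) - ∑ l, x j l * βs l) ^ 2 ≤ γ ^ 2} = ∅ := by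
              ext x; simp [h]
            simp [he]
  -- counting
  have hcount : (∑ i : Fin n, ∑ j : Fin n, (if i < j then b else 0))
      = ((n * (n - 1) / 2 : ℕ) : ℝ≥0∞) * b := by
    rw [Finset.sum_comm]
    have hinner : ∀ j : Fin n, (∑ i : Fin n, if i < j then b else 0) = ((j : ℕ) : ℝ≥0∞) * b := by
      intro j
      rw [← Finset.sum_filter]
      rw [Finset.filter_gt_eq_Iio, Finset.sum_const, Fin.card_Iio]
      simp [nsmul_eq_mul]
    simp_rw [hinner]
    rw [← Finset.sum_mul]
    congr 1
    rw [← Nat.cast_sum]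
    congr 1
    rw [Fin.sum_univ_eq_sum_range (fun i => i) n]
    exact Finset.sum_range_id n
  -- final arithmetic
  have hs : 0 < (V : ℝ) := by rw [hVs]; exact hspos
  have hπ : 0 < Real.pi := Real.pi_pos
  set t : ℝ := Real.sqrt (Real.pi * (V : ℝ)) with htdef
  have ht : 0 < t := by rw [htdef]; positivity
  have ht2 : t ^ 2 = Real.pi * (V : ℝ) := Real.sq_sqrt (by positivity)
  have hsqrt : Real.sqrt (2 * Real.pi * ((V : ℝ) + (V : ℝ))) = 2 * t := by
    rw [htdef, show 2 * Real.pi * ((V : ℝ) + (V : ℝ)) = 2 ^ 2 * (Real.pi * (V : ℝ)) by ring,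
      Real.sqrt_mul (by positivity), Real.sqrt_sq (by norm_num : (0:ℝ) ≤ 2)]
  have hl2 : l2 βs ^ 2 = (V : ℝ) := by
    unfold l2
    rw [Real.sq_sqrt (Finset.sum_nonneg fun l _ => sq_nonneg _), hVs]
  rw [hl2] at hsnr
  have hu : (0:ℝ) ≤ (n : ℝ) * ((n : ℝ) - 1) := by
    rcases Nat.eq_zero_or_pos n with h | h
    · simp [h]
    · have : (1:ℝ) ≤ (n:ℝ) := by exact_mod_cast h
      nlinarith
  have hkey : (n : ℝ) * ((n : ℝ) - 1) * γ < 2 * δ * t := by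
    have h5 : (n : ℝ) ^ 2 * ((n : ℝ) - 1) ^ 2 * γ ^ 2 / (4 * δ ^ 2 * Real.pi) < (V : ℝ) := by
      rw [div_mul_eq_mul_div] at hsnr
      exact hsnr
    rw [div_lt_iff₀ (by positivity)] at h5
    have h4 : (n : ℝ) ^ 2 * ((n : ℝ) - 1) ^ 2 * γ ^ 2 < 4 * δ ^ 2 * (Real.pi * (V : ℝ)) := by
      nlinarith [h5]
    rw [← ht2] at h4
    by_contra hcon
    push_neg at hcon
    nlinarith [mul_pos hδ ht]
  have hNle : ((n * (n - 1) / 2 : ℕ) : ℝ) ≤ (n : ℝ) * ((n : ℝ) - 1) / 2 := by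
    rcases n with _ | m
    · simp
    · show (((m + 1) * ((m + 1) - 1) / 2 : ℕ) : ℝ)
          ≤ ((m + 1 : ℕ) : ℝ) * (((m + 1 : ℕ) : ℝ) - 1) / 2
      rw [Nat.add_sub_cancel]
      have h1 : (((m + 1) * m / 2 : ℕ) : ℝ) ≤ (((m + 1) * m : ℕ) : ℝ) / 2 :=
        Nat.cast_div_le
      have h2 : ((m + 1 : ℕ) : ℝ) * (((m + 1 : ℕ) : ℝ) - 1) / 2
          = (((m + 1) * m : ℕ) : ℝ) / 2 := by push_cast; ring
      rw [h2]
      exact h1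
  have hbrealeq : 2 * γ * (Real.sqrt (2 * Real.pi * ((V : ℝ) + (V : ℝ))))⁻¹ = γ / t := by
    rw [hsqrt]
    field_simp
  have hfinal : ((n * (n - 1) / 2 : ℕ) : ℝ)
      * (2 * γ * (Real.sqrt (2 * Real.pi * ((V : ℝ) + (V : ℝ))))⁻¹) < δ := by
    rw [hbrealeq]
    calc ((n * (n - 1) / 2 : ℕ) : ℝ) * (γ / t)
        ≤ ((n : ℝ) * ((n : ℝ) - 1) / 2) * (γ / t) := by
          apply mul_le_mul_of_nonneg_right hNle (by positivity)
      _ = ((n : ℝ) * ((n : ℝ) - 1) * γ) / (2 * t) := by field_simp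
      _ < δ := by
          rw [div_lt_iff₀ (by positivity)]
          nlinarith [hkey]
  calc μX n d {x | ∃ i j : Fin n, i < j ∧
        ((∑ l, x i l * βs l) - ∑ l, x j l * βs l) ^ 2 ≤ γ ^ 2}
      ≤ ((n * (n - 1) / 2 : ℕ) : ℝ≥0∞) * b := by rw [hcount] at hbound; exact hbound
    _ = ENNReal.ofReal (((n * (n - 1) / 2 : ℕ) : ℝ)
          * (2 * γ * (Real.sqrt (2 * Real.pi * ((V : ℝ) + (V : ℝ))))⁻¹)) := by
        rw [hb, ← ENNReal.ofReal_natCast (n * (n - 1) / 2),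
          ← ENNReal.ofReal_mul (Nat.cast_nonneg _)]
    _ < ENNReal.ofReal δ := by
        rw [ENNReal.ofReal_lt_ofReal_iff hδ]
        exact hfinal

end
end

section
/- Consider the model y = Π*Xβ* + ε with Π* an n×n permutation matrix, X ∈ ℝ^{n×d} a fixed (conditioned-on) design matrix with rows x_1,…,x_n, and ε with i.i.d. N(0,σ²) entries. Define Π̂(β*) := argmax_{Π ∈ P_n} ⟨ΠXβ*, y⟩. If min_{i<j} (x_iᵀβ* − x_jᵀβ*)² > 4σ²·log(n(n−1)/δ) for some δ > 0, then P(Π̂(β*) ≠ Π* | X) < δ. -/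
open MeasureTheory ProbabilityTheory Matrix

noncomputable section

def permVec {n : ℕ} (σ : Equiv.Perm (Fin n)) (v : Fin n → ℝ) : Fin n → ℝ := fun i => v (σ i)

/-- noise distribution: iid N(0, σ²) entries -/
abbrev μNoise (n : ℕ) (σ : ℝ) : Measure (Fin n → ℝ) :=
  Measure.pi fun _ => gaussianReal 0 ⟨σ ^ 2, sq_nonneg σ⟩

/-- lintegral of a product of coordinate functions over a pi measure factorizes. -/
lemma lintegral_pi_prod {n : ℕ} (μ : Fin n → Measure ℝ) [∀ i, IsProbabilityMeasure (μ i)]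
    (g : Fin n → ℝ → ENNReal) (hg : ∀ i, Measurable (g i)) :
    ∫⁻ ε, ∏ k, g k (ε k) ∂Measure.pi μ = ∏ k, ∫⁻ x, g k x ∂μ k := by
  have hf : Measurable fun ε : Fin n → ℝ => ∏ k, g k (ε k) :=
    Finset.measurable_prod _ fun k _ => (hg k).comp (measurable_pi_apply k)
  have key : ∀ s : Finset (Fin n), ∀ x : Fin n → ℝ,
      (∫⋯∫⁻_s, (fun ε => ∏ k, g k (ε k)) ∂μ) x
        = (∏ k ∈ s, ∫⁻ t, g k t ∂μ k) * ∏ k ∈ sᶜ, g k (x k) := by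
    intro s
    induction s using Finset.induction_on with
    | empty => intro x; simp
    | @insert i s hi ih =>
      intro x
      rw [lmarginal_insert _ hf hi]
      have h1 : ∀ xᵢ : ℝ,
          (∫⋯∫⁻_s, (fun ε => ∏ k, g k (ε k)) ∂μ) (Function.update x i xᵢ)
            = ((∏ k ∈ s, ∫⁻ t, g k t ∂μ k) * ∏ k ∈ sᶜ.erase i, g k (x k)) * g i xᵢ := by
        intro xᵢ
        rw [ih]
        have hi' : i ∈ sᶜ := Finset.mem_compl.2 hi
        rw [← Finset.mul_prod_erase _ _ hi']
        have : ∀ k ∈ sᶜ.erase i, g k (Function.update x i xᵢ k) = g k (x k) := by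
          intro k hk
          rw [Function.update_of_ne (Finset.ne_of_mem_erase hk)]
        rw [Finset.prod_congr rfl this, Function.update_self]
        ring
      simp_rw [h1]
      rw [lintegral_const_mul _ (hg i), Finset.prod_insert hi, Finset.compl_insert]
      ring
  rw [lintegral_eq_lmarginal_univ (fun _ => 0), key, Finset.compl_univ]
  simp

end

/-- mgf of a centered Gaussian. -/
lemma lintegral_exp_gaussian (v : NNReal) (hv : v ≠ 0) (t : ℝ) :
    ∫⁻ x, ENNReal.ofReal (Real.exp (t * x)) ∂gaussianReal 0 v
      = ENNReal.ofReal (Real.exp (t ^ 2 * v / 2)) := by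
  have hV : (0:ℝ) < (v:ℝ) := by exact_mod_cast hv.bot_lt
  have hmeas : Measurable fun x : ℝ => ENNReal.ofReal (Real.exp (t * x)) :=
    ENNReal.measurable_ofReal.comp ((Real.continuous_exp.measurable).comp
      (measurable_const.mul measurable_id))
  rw [gaussianReal_of_var_ne_zero 0 hv,
    lintegral_withDensity_eq_lintegral_mul _ (measurable_gaussianPDF 0 v) hmeas]
  have hpt : ∀ x : ℝ, (gaussianPDF 0 v * fun x => ENNReal.ofReal (Real.exp (t * x))) x
      = ENNReal.ofReal (Real.exp (t ^ 2 * v / 2)) * gaussianPDF (t * v) v x := by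
    intro x
    simp only [Pi.mul_apply, gaussianPDF_def]
    rw [← ENNReal.ofReal_mul (gaussianPDFReal_nonneg 0 v x), ← ENNReal.ofReal_mul (by positivity)]
    congr 1
    simp only [gaussianPDFReal_def]
    have e1 : Real.exp (-(x - 0) ^ 2 / (2 * (v:ℝ))) * Real.exp (t * x)
        = Real.exp (t ^ 2 * (v:ℝ) / 2) * Real.exp (-(x - t * (v:ℝ)) ^ 2 / (2 * (v:ℝ))) := by
      rw [← Real.exp_add, ← Real.exp_add]
      congr 1
      field_simp
      ring
    linear_combination (√(2 * Real.pi * (v:ℝ)))⁻¹ * e1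
  simp_rw [hpt]
  rw [lintegral_const_mul _ (measurable_gaussianPDF (t * v) v),
    lintegral_gaussianPDF_eq_one (t * v) hv, mul_one]

/-- Chernoff tail bound for a difference of two iid Gaussian coordinates. -/
lemma pair_tail {n : ℕ} (σ : ℝ) (hσ : 0 < σ) (i j : Fin n) (hij : i ≠ j) (a : ℝ) :
    μNoise n σ {ε | a ^ 2 ≤ a * (ε j - ε i)}
      ≤ ENNReal.ofReal (Real.exp (-(a ^ 2) / (4 * σ ^ 2))) := by
  have hvc : ((⟨σ ^ 2, sq_nonneg σ⟩ : NNReal) : ℝ) = σ ^ 2 := rfl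
  have hv : (⟨σ ^ 2, sq_nonneg σ⟩ : NNReal) ≠ 0 := by
    intro h
    have h2 : σ ^ 2 = 0 := by rw [← hvc, h]; rfl
    exact (pow_ne_zero 2 hσ.ne') h2
  set lam : ℝ := 1 / (2 * σ ^ 2) with hlam
  have hlam_pos : 0 < lam := by positivity
  set c : Fin n → ℝ := fun k =>
    (if k = j then lam * a else 0) - (if k = i then lam * a else 0) with hc
  have hsum : ∀ ε : Fin n → ℝ, ∑ k, c k * ε k = lam * a * (ε j - ε i) := by
    intro ε
    simp only [hc, sub_mul, ite_mul, zero_mul, Finset.sum_sub_distrib,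
      Finset.sum_ite_eq', Finset.mem_univ, if_true]
    ring
  have hpt : ∀ ε : Fin n → ℝ,
      ENNReal.ofReal (Real.exp (-(lam * a ^ 2))) * ∏ k, ENNReal.ofReal (Real.exp (c k * ε k))
        = ENNReal.ofReal (Real.exp (lam * (a * (ε j - ε i) - a ^ 2))) := by
    intro ε
    rw [← ENNReal.ofReal_prod_of_nonneg (fun k _ => Real.exp_nonneg _), ← Real.exp_sum, hsum ε,
      ← ENNReal.ofReal_mul (Real.exp_nonneg _), ← Real.exp_add]
    congr 2
    ring
  have hmeasg : ∀ k : Fin n, Measurable fun x : ℝ => ENNReal.ofReal (Real.exp (c k * x)) :=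
    fun k => ENNReal.measurable_ofReal.comp (Real.continuous_exp.measurable.comp
      (measurable_const.mul measurable_id))
  have hmeasF : Measurable fun ε : Fin n → ℝ =>
      ENNReal.ofReal (Real.exp (lam * (a * (ε j - ε i) - a ^ 2))) := by
    apply ENNReal.measurable_ofReal.comp
    apply Real.continuous_exp.measurable.comp
    exact measurable_const.mul (by fun_prop)
  have hstep1 : μNoise n σ {ε | a ^ 2 ≤ a * (ε j - ε i)}
      ≤ ∫⁻ ε, ENNReal.ofReal (Real.exp (lam * (a * (ε j - ε i) - a ^ 2))) ∂μNoise n σ := by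
    rw [← setLIntegral_one]
    refine le_trans (setLIntegral_mono hmeasF ?_) (setLIntegral_le_lintegral _ _)
    intro ε hε
    have h0 : (0:ℝ) ≤ lam * (a * (ε j - ε i) - a ^ 2) :=
      mul_nonneg hlam_pos.le (by simpa [sub_nonneg] using hε)
    simpa using ENNReal.one_le_ofReal.2 (Real.one_le_exp h0)
  have hstep2 : ∫⁻ ε, ENNReal.ofReal (Real.exp (lam * (a * (ε j - ε i) - a ^ 2))) ∂μNoise n σ
      = ENNReal.ofReal (Real.exp (-(lam * a ^ 2)))
        * ∏ k, ENNReal.ofReal (Real.exp ((c k) ^ 2 * σ ^ 2 / 2)) := by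
    simp_rw [← hpt]
    have hprodmeas : Measurable fun ε : Fin n → ℝ =>
        ∏ k, ENNReal.ofReal (Real.exp (c k * ε k)) :=
      Finset.measurable_prod _ fun k _ => by exact (hmeasg k).comp (measurable_pi_apply k)
    rw [lintegral_const_mul _ hprodmeas]
    congr 1
    refine (@lintegral_pi_prod _ _ (fun _ => instIsProbabilityMeasureGaussianReal 0 _) _ hmeasg).trans ?_
    refine Finset.prod_congr rfl fun k _ => ?_
    rw [lintegral_exp_gaussian _ hv (c k)]
    rfl
  have hsumsq : ∑ k, (c k) ^ 2 * σ ^ 2 / 2 = (lam * a) ^ 2 * σ ^ 2 := by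
    have hck : ∀ k : Fin n, (c k) ^ 2 * σ ^ 2 / 2
        = (if k = j then (lam * a) ^ 2 * σ ^ 2 / 2 else 0)
          + (if k = i then (lam * a) ^ 2 * σ ^ 2 / 2 else 0) := by
      intro k
      have hji : ¬ (j = i) := fun h => hij h.symm
      by_cases h1 : k = j
      · subst h1
        simp [hc, hji]
      · by_cases h2 : k = i
        · subst h2
          simp [hc, h1]
        · simp [hc, h1, h2]
    simp_rw [hck]
    rw [Finset.sum_add_distrib, Finset.sum_ite_eq', Finset.sum_ite_eq']
    simp only [Finset.mem_univ, if_true]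
    ring
  rw [hstep2, ← ENNReal.ofReal_prod_of_nonneg (fun k _ => Real.exp_nonneg _), ← Real.exp_sum,
    hsumsq, ← ENNReal.ofReal_mul (Real.exp_nonneg _), ← Real.exp_add] at hstep1
  refine le_trans hstep1 (le_of_eq ?_)
  have hσ' : σ ≠ 0 := hσ.ne'
  congr 2
  simp only [hlam]
  field_simp
  ring

/-- Strict rearrangement: a non-identity permutation strictly decreases the inner product
against a strictly comonotone pair. -/
lemma perm_sum_lt {n : ℕ} (w y : Fin n → ℝ)
    (H : ∀ i j : Fin n, i ≠ j → 0 < (w i - w j) * (y i - y j))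
    (τ : Equiv.Perm (Fin n)) (hτ : τ ≠ 1) :
    ∑ k, w (τ k) * y k < ∑ k, w k * y k := by
  have hmono : Monovary w y := by
    intro p q hpq
    have hpq' : p ≠ q := fun h => absurd (h ▸ hpq) (lt_irrefl _)
    nlinarith [H p q hpq']
  rw [hmono.sum_comp_perm_mul_lt_sum_mul_iff]
  intro M
  have hsupp : τ.support.Nonempty := by
    rw [Finset.nonempty_iff_ne_empty]
    intro h
    exact hτ (Equiv.Perm.support_eq_empty_iff.1 h)
  obtain ⟨i0, hi0, hmax⟩ := Finset.exists_max_image τ.support y hsupp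
  have hi0' : τ i0 ≠ i0 := Equiv.Perm.mem_support.1 hi0
  have hk0supp : τ i0 ∈ τ.support := Equiv.Perm.apply_mem_support.2 hi0
  have hj0supp : τ⁻¹ i0 ∈ τ.support := by
    rw [← Equiv.Perm.support_inv]
    exact Equiv.Perm.apply_mem_support.2 (by rwa [Equiv.Perm.support_inv])
  have hj0ne : τ⁻¹ i0 ≠ i0 := by
    intro h
    exact hi0' (by conv_lhs => rw [← h, Equiv.Perm.coe_inv, Equiv.apply_symm_apply])
  have hyk0 : y (τ i0) < y i0 := by
    refine lt_of_le_of_ne (hmax _ hk0supp) (fun h => ?_)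
    have := H (τ i0) i0 hi0'
    rw [h] at this
    simp at this
  have hw0 : w (τ i0) < w i0 := by nlinarith [H (τ i0) i0 hi0']
  have hyj0 : y (τ⁻¹ i0) < y i0 := by
    refine lt_of_le_of_ne (hmax _ hj0supp) (fun h => ?_)
    have := H (τ⁻¹ i0) i0 hj0ne
    rw [h] at this
    simp at this
  have h2 : w i0 ≤ w (τ i0) := by
    have := M hyj0
    simpa [Function.comp, Equiv.Perm.coe_inv, Equiv.apply_symm_apply] using this
  exact absurd h2 (not_le.2 hw0)

/-- **Lemma 8 (permutation recovery with a fixed design).**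
Model `y = Π* X β* + ε` with `X` fixed and `ε` iid `N(0,σ²)`; let
`Π̂(β*) = argmax_{Π ∈ P_n} ⟨Π X β*, y⟩`.  If
`min_{i<j}(x_iᵀβ* - x_jᵀβ*)² > 4σ² log(n(n-1)/δ)` for some `δ > 0`, then
`P(Π̂(β*) ≠ Π* | X) < δ`. -/
theorem fixed_design_permutation_recovery
    (n d : ℕ) (X : Matrix (Fin n) (Fin d) ℝ) (βs : Fin d → ℝ) (σ δ : ℝ)
    (hσ : 0 < σ) (hδ : 0 < δ) (πs : Equiv.Perm (Fin n))
    (Phat : (Fin n → ℝ) → Equiv.Perm (Fin n))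
    (hargmax : ∀ ε : Fin n → ℝ, ∀ π' : Equiv.Perm (Fin n),
        (∑ i, permVec π' (X *ᵥ βs) i * (permVec πs (X *ᵥ βs) + ε) i) ≤
        (∑ i, permVec (Phat ε) (X *ᵥ βs) i * (permVec πs (X *ᵥ βs) + ε) i))
    (hgap : ∀ i j : Fin n, i < j →
        4 * σ ^ 2 * Real.log ((n : ℝ) * ((n : ℝ) - 1) / δ) <
          ((X *ᵥ βs) i - (X *ᵥ βs) j) ^ 2) :
    μNoise n σ {ε | Phat ε ≠ πs} < ENNReal.ofReal δ := by
  classical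
  by_cases hn : n ≤ 1
  · have hsub : Subsingleton (Fin n) := Fin.subsingleton_iff_le_one.2 hn
    have hempty : {ε : Fin n → ℝ | Phat ε ≠ πs} = ∅ := by
      ext ε
      simp only [Set.mem_setOf_eq, Set.mem_empty_iff_false, iff_false, not_not]
      exact Equiv.ext fun x => Subsingleton.elim _ _
    rw [hempty]
    simpa using ENNReal.ofReal_pos.2 hδ
  push_neg at hn
  by_cases hδ1 : 1 < δ
  · calc μNoise n σ {ε | Phat ε ≠ πs} ≤ 1 := by
          haveI := (fun _ : Fin n => instIsProbabilityMeasureGaussianReal 0 ⟨σ ^ 2, sq_nonneg σ⟩)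
          exact prob_le_one
      _ < ENNReal.ofReal δ := by
          rw [← ENNReal.ofReal_one]
          exact (ENNReal.ofReal_lt_ofReal_iff (lt_trans one_pos hδ1)).2 hδ1
  push_neg at hδ1
  set v : Fin n → ℝ := X *ᵥ βs with hv
  set w : Fin n → ℝ := fun k => v (πs k) with hw
  set N : ℝ := (n : ℝ) * ((n : ℝ) - 1) with hN
  have hn2 : (2:ℝ) ≤ (n:ℝ) := by exact_mod_cast hn
  have hNpos : (0:ℝ) < N := by nlinarith
  have hL : 0 ≤ Real.log (N / δ) := Real.log_nonneg (by rw [le_div_iff₀ hδ]; nlinarith)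
  have hgapw : ∀ i j : Fin n, i ≠ j → 4 * σ ^ 2 * Real.log (N / δ) < (w i - w j) ^ 2 := by
    intro i j hij
    have hpij : πs i ≠ πs j := fun h => hij (πs.injective h)
    rcases lt_or_gt_of_ne hpij with h | h
    · exact hgap _ _ h
    · have h1 := hgap _ _ h
      have h2 : (v (πs j) - v (πs i)) ^ 2 = (w i - w j) ^ 2 := by rw [hw]; ring
      linarith
  set B : Fin n → Fin n → Set (Fin n → ℝ) :=
    fun i j => {ε | (w i - w j) ^ 2 ≤ (w i - w j) * (ε j - ε i)} with hB
  have hincl : {ε : Fin n → ℝ | Phat ε ≠ πs}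
      ⊆ ⋃ p ∈ (Finset.univ.offDiag : Finset (Fin n × Fin n)), B p.1 p.2 := by
    intro ε hε
    by_contra hcon
    simp only [Set.mem_iUnion, not_exists] at hcon
    have H : ∀ i j : Fin n, i ≠ j → 0 < (w i - w j) * ((w i + ε i) - (w j + ε j)) := by
      intro i j hij
      have hp : ((i, j) : Fin n × Fin n) ∈ Finset.univ.offDiag := by
        simp [Finset.mem_offDiag, hij]
      have hnb := hcon (i, j) hp
      rw [hB] at hnb
      simp only [Set.mem_setOf_eq, not_le] at hnb
      nlinarith [hnb]
    set y : Fin n → ℝ := fun k => w k + ε k with hy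
    set τ : Equiv.Perm (Fin n) := πs⁻¹ * Phat ε with hτdef
    have hτ : τ ≠ 1 := by
      intro h
      rw [hτdef, inv_mul_eq_one] at h
      exact hε h.symm
    have hlt := perm_sum_lt w y (fun i j hij => by simpa [hy] using H i j hij) τ hτ
    have hge := hargmax ε πs
    have hsum1 : ∑ i, permVec πs v i * (permVec πs v + ε) i = ∑ k, w k * y k :=
      Finset.sum_congr rfl fun k _ => by simp [permVec, hw, hy]
    have hsum2 : ∑ i, permVec (Phat ε) v i * (permVec πs v + ε) i = ∑ k, w (τ k) * y k :=
      Finset.sum_congr rfl fun k _ => by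
        simp [permVec, hw, hy, hτdef, Equiv.Perm.mul_apply, Equiv.Perm.coe_inv, Equiv.apply_symm_apply]
    rw [hsum1, hsum2] at hge
    linarith
  have hcard : (Finset.univ.offDiag : Finset (Fin n × Fin n)).card = n * n - n := by
    simp [Finset.offDiag_card]
  have hterm : ∀ p ∈ (Finset.univ.offDiag : Finset (Fin n × Fin n)),
      Real.exp (-((w p.1 - w p.2) ^ 2) / (4 * σ ^ 2)) < δ / N := by
    intro p hp
    have hij : p.1 ≠ p.2 := (Finset.mem_offDiag.1 hp).2.2
    have hg := hgapw p.1 p.2 hij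
    have h4 : (0:ℝ) < 4 * σ ^ 2 := by positivity
    have hlt : -((w p.1 - w p.2) ^ 2) / (4 * σ ^ 2) < -Real.log (N / δ) := by
      rw [div_lt_iff₀ h4]
      nlinarith
    calc Real.exp (-((w p.1 - w p.2) ^ 2) / (4 * σ ^ 2))
        < Real.exp (-Real.log (N / δ)) := Real.exp_lt_exp.2 hlt
      _ = δ / N := by
          rw [← Real.log_inv, Real.exp_log (by positivity), inv_div]
  have hne : (Finset.univ.offDiag : Finset (Fin n × Fin n)).Nonempty := by
    rw [← Finset.card_pos, hcard]
    have h1 : n < n * n := by nlinarith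
    omega
  calc μNoise n σ {ε | Phat ε ≠ πs}
      ≤ ∑ p ∈ (Finset.univ.offDiag : Finset (Fin n × Fin n)), μNoise n σ (B p.1 p.2) :=
        le_trans (measure_mono hincl) (measure_biUnion_finset_le _ _)
    _ ≤ ∑ p ∈ (Finset.univ.offDiag : Finset (Fin n × Fin n)),
          ENNReal.ofReal (Real.exp (-((w p.1 - w p.2) ^ 2) / (4 * σ ^ 2))) := by
        refine Finset.sum_le_sum fun p hp => ?_
        have hij : p.1 ≠ p.2 := (Finset.mem_offDiag.1 hp).2.2
        exact pair_tail σ hσ p.1 p.2 hij (w p.1 - w p.2)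
    _ = ENNReal.ofReal (∑ p ∈ (Finset.univ.offDiag : Finset (Fin n × Fin n)),
          Real.exp (-((w p.1 - w p.2) ^ 2) / (4 * σ ^ 2))) :=
        (ENNReal.ofReal_sum_of_nonneg fun p _ => (Real.exp_nonneg _)).symm
    _ < ENNReal.ofReal δ := by
        rw [ENNReal.ofReal_lt_ofReal_iff hδ]
        calc ∑ p ∈ (Finset.univ.offDiag : Finset (Fin n × Fin n)),
              Real.exp (-((w p.1 - w p.2) ^ 2) / (4 * σ ^ 2))
            < ∑ _p ∈ (Finset.univ.offDiag : Finset (Fin n × Fin n)), δ / N :=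
              Finset.sum_lt_sum_of_nonempty hne hterm
          _ = ((n * n - n : ℕ) : ℝ) * (δ / N) := by
              rw [Finset.sum_const, hcard, nsmul_eq_mul]
          _ = δ := by
              have hcast : ((n * n - n : ℕ) : ℝ) = N := by
                have hle : n ≤ n * n := Nat.le_mul_of_pos_left n (by omega)
                push_cast [Nat.cast_sub hle]
                rw [hN]
                ring
              rw [hcast]
              field_simp
end

section
/- Let 1 ≤ k ≤ n/2 and let Π* be a k-sparse n×n permutation matrix. Define T := (⋃_{Π ∈ P_{n,k}} range(Π − Π*ᵀ)) ∩ S^{n−1}. Then the Gaussian width of T satisfies w(T) ≤ 3.5·√(2k·log(e·n/(2k))). -/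
open MeasureTheory ProbabilityTheory

noncomputable section

def dH {n : ℕ} (σ : Equiv.Perm (Fin n)) : ℕ := (Finset.univ.filter fun i => σ i ≠ i).card

abbrev gaussPi (m : ℕ) : Measure (Fin m → ℝ) := Measure.pi fun _ => stdGaussian

/-- Gaussian width of a set `K ⊆ ℝⁿ`. -/
def gwidth {n : ℕ} (K : Set (Fin n → ℝ)) : ℝ :=
  ∫ g, sSup ((fun x => |∑ i, g i * x i|) '' K) ∂(gaussPi n)

/-- The set `T = (⋃_{Π ∈ P_{n,k}} range(Π - Π*ᵀ)) ∩ S^{n-1}`. -/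
def setT (n k : ℕ) (πs : Equiv.Perm (Fin n)) : Set (Fin n → ℝ) :=
  {w | (∃ σ : Equiv.Perm (Fin n), dH σ ≤ k ∧ ∃ v : Fin n → ℝ,
          w = permVec σ v - permVec πs⁻¹ v) ∧ l2 w = 1}

/-! ### Auxiliary material -/

open scoped ENNReal NNReal

/-- A type synonym for `ℝ` carrying the standard Gaussian as its volume. -/
def GR : Type := ℝ
instance : MeasurableSpace GR := inferInstanceAs (MeasurableSpace ℝ)
instance : MeasureSpace GR := { volume := stdGaussian }
instance : SigmaFinite (volume : Measure GR) := inferInstanceAs (SigmaFinite stdGaussian)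

lemma integrable_prod_gaussPi {n : ℕ} (f : Fin n → ℝ → ℝ)
    (hf : ∀ i, Integrable (f i) stdGaussian) :
    Integrable (fun g : Fin n → ℝ => ∏ i, f i (g i)) (gaussPi n) :=
  MeasureTheory.Integrable.fintype_prod (E := ℝ) (f := f) (μ := fun _ => _root_.stdGaussian) hf

lemma integral_prod_gaussPi {n : ℕ} (f : Fin n → ℝ → ℝ) :
    ∫ g, ∏ i, f i (g i) ∂(gaussPi n) = ∏ i, ∫ x, f i x ∂stdGaussian :=
  MeasureTheory.integral_fintype_prod_eq_prod (𝕜 := ℝ) (ι := Fin n) (E := fun _ => ℝ) f (μ := fun _ => _root_.stdGaussian)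

lemma stdGaussian_integral_eq (f : ℝ → ℝ) :
    ∫ x, f x ∂stdGaussian = ∫ x, gaussianPDFReal 0 1 x * f x := by
  rw [show _root_.stdGaussian = volume.withDensity (gaussianPDF 0 1) from
    gaussianReal_of_var_ne_zero 0 one_ne_zero]
  rw [show gaussianPDF 0 1 = fun x => ((gaussianPDFReal 0 1 x).toNNReal : ℝ≥0∞) from rfl]
  rw [integral_withDensity_eq_integral_smul (measurable_gaussianPDFReal 0 1).real_toNNReal f]
  congr 1; ext x
  rw [NNReal.smul_def, smul_eq_mul, Real.coe_toNNReal _ (gaussianPDFReal_nonneg _ _ _)]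

lemma pdf_mul_exp (x : ℝ) : gaussianPDFReal 0 1 x * Real.exp (x^2/4)
    = (Real.sqrt (2*Real.pi))⁻¹ * Real.exp (-(4:ℝ)⁻¹ * x^2) := by
  have h1 : ((1:ℝ≥0):ℝ) = 1 := rfl
  simp only [gaussianPDFReal, h1, mul_one, sub_zero]
  rw [mul_assoc, ← Real.exp_add]
  congr 2
  ring

lemma integrable_exp_sq_quarter : Integrable (fun x : ℝ => Real.exp (x^2/4)) stdGaussian := by
  rw [show _root_.stdGaussian = volume.withDensity (gaussianPDF 0 1) from
    gaussianReal_of_var_ne_zero 0 one_ne_zero]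
  rw [show gaussianPDF 0 1 = fun x => ((gaussianPDFReal 0 1 x).toNNReal : ℝ≥0∞) from rfl]
  rw [integrable_withDensity_iff_integrable_smul (measurable_gaussianPDFReal 0 1).real_toNNReal]
  have : (fun x : ℝ => ((gaussianPDFReal 0 1 x).toNNReal : ℝ≥0) • Real.exp (x^2/4))
      = fun x => (Real.sqrt (2*Real.pi))⁻¹ * Real.exp (-(4:ℝ)⁻¹ * x^2) := by
    funext x
    rw [NNReal.smul_def, smul_eq_mul, Real.coe_toNNReal _ (gaussianPDFReal_nonneg _ _ _),
      pdf_mul_exp]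
  rw [this]
  exact (integrable_exp_neg_mul_sq (by norm_num)).const_mul _

lemma integral_exp_sq_quarter : ∫ x, Real.exp (x^2/4) ∂stdGaussian = Real.sqrt 2 := by
  rw [stdGaussian_integral_eq]
  have : (fun x : ℝ => gaussianPDFReal 0 1 x * Real.exp (x^2/4))
      = fun x => (Real.sqrt (2*Real.pi))⁻¹ * Real.exp (-(4:ℝ)⁻¹ * x^2) := funext pdf_mul_exp
  rw [this, integral_const_mul, integral_gaussian]
  have hπ := Real.pi_pos
  rw [← Real.sqrt_inv, ← Real.sqrt_mul (by positivity)]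
  congr 1
  field_simp
  ring

set_option maxHeartbeats 1000000 in
/-- **Gaussian width bound for `T`:** if `1 ≤ k ≤ n/2` and `Π*` is `k`-sparse, then
`w(T) ≤ 3.5 √(2k log(e n/(2k)))`. -/
theorem gwidth_setT_bound (n k : ℕ) (hk : 1 ≤ k) (hkn : 2 * k ≤ n)
    (πs : Equiv.Perm (Fin n)) (hπs : dH πs ≤ k) :
    gwidth (setT n k πs) ≤
      3.5 * Real.sqrt (2 * (k : ℝ) * Real.log (Real.exp 1 * n / (2 * (k : ℝ)))) := by
  classical
  set m : ℕ := 2 * k with hm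
  have hmn : m ≤ n := hkn
  have hm2 : 2 ≤ m := by omega
  have hmR : (m : ℝ) = 2 * (k : ℝ) := by push_cast [hm]; ring
  have hmpos : (0:ℝ) < m := by positivity
  set L : ℝ := Real.log (Real.exp 1 * n / (2 * (k : ℝ))) with hLdef
  have hkpos : (0:ℝ) < 2 * (k:ℝ) := by positivity
  have hnk : (2:ℝ) * k ≤ n := by exact_mod_cast hkn
  have hnpos : (0:ℝ) < n := lt_of_lt_of_le hkpos hnk
  have hargpos : 0 < Real.exp 1 * n / (2 * (k:ℝ)) := by positivity
  have hL1 : 1 ≤ L := by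
    rw [hLdef]
    have h1 : Real.exp 1 ≤ Real.exp 1 * n / (2 * (k:ℝ)) := by
      rw [le_div_iff₀ hkpos]
      nlinarith [Real.exp_pos 1]
    calc (1:ℝ) = Real.log (Real.exp 1) := (Real.log_exp 1).symm
      _ ≤ _ := Real.log_le_log (Real.exp_pos 1) h1
  -- the collection of subsets of size m
  set 𝒮 : Finset (Finset (Fin n)) := Finset.powersetCard m Finset.univ with h𝒮
  have h𝒮ne : 𝒮.Nonempty := by
    rw [h𝒮]
    exact Finset.powersetCard_nonempty.2 (by simp [hmn])
  set X : Finset (Fin n) → (Fin n → ℝ) → ℝ := fun S g => ∑ i ∈ S, g i ^ 2 with hX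
  set Y : (Fin n → ℝ) → ℝ := fun g => ∑ S ∈ 𝒮, Real.exp (X S g / 4) with hY
  set A : ℝ := (n.choose m : ℝ) * Real.sqrt 2 ^ m with hA
  have hchoose1 : (1:ℝ) ≤ (n.choose m : ℝ) := by
    exact_mod_cast Nat.one_le_iff_ne_zero.2 (Nat.choose_pos hmn).ne'
  have hsqrt2 : (1:ℝ) ≤ Real.sqrt 2 := by
    rw [show (1:ℝ) = Real.sqrt 1 by simp]
    exact Real.sqrt_le_sqrt (by norm_num)
  have hpow2 : (2:ℝ) ≤ Real.sqrt 2 ^ m := by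
    calc (2:ℝ) = Real.sqrt 2 ^ 2 := (Real.sq_sqrt (by norm_num)).symm
      _ ≤ Real.sqrt 2 ^ m := pow_le_pow_right₀ hsqrt2 hm2
  have hA2 : 2 ≤ A := by
    calc (2:ℝ) = 1 * 2 := (one_mul 2).symm
      _ ≤ (n.choose m : ℝ) * Real.sqrt 2 ^ m :=
          mul_le_mul hchoose1 hpow2 (by norm_num) (by linarith)
  have hApos : 0 < A := by linarith
  set B : ℝ := 4 * Real.log A with hB
  have hBpos : 0 < B := by
    have := Real.log_pos (by linarith : 1 < A)
    rw [hB]; linarith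
  have hsB : 0 < Real.sqrt B := Real.sqrt_pos.2 hBpos
  -- the sup over subsets
  set M : (Fin n → ℝ) → ℝ := fun g => 𝒮.sup' h𝒮ne (fun S => X S g) with hM
  -- basic positivity facts
  have hXnn : ∀ S g, 0 ≤ X S g := fun S g => Finset.sum_nonneg fun i _ => sq_nonneg _
  have hMnn : ∀ g, 0 ≤ M g := by
    intro g
    obtain ⟨S₀, hS₀⟩ := h𝒮ne
    refine le_trans (hXnn S₀ g) ?_
    simp only [hM]
    exact Finset.le_sup' (fun S => X S g) hS₀
  have hYpos : ∀ g, 0 < Y g := fun g =>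
    Finset.sum_pos (fun S _ => Real.exp_pos _) h𝒮ne
  -- pointwise bound on the sup
  have hpt : ∀ g : Fin n → ℝ,
      sSup ((fun x => |∑ i, g i * x i|) '' setT n k πs)
        ≤ (4 * Y g / A + (2 * B - 4)) / (2 * Real.sqrt B) := by
    intro g
    -- Step 1: sup ≤ sqrt (M g)
    have hstep1 : sSup ((fun x => |∑ i, g i * x i|) '' setT n k πs) ≤ Real.sqrt (M g) := by
      apply Real.sSup_le _ (Real.sqrt_nonneg _)
      rintro y ⟨x, hxT, rfl⟩
      obtain ⟨⟨σ, hσ, v, hxv⟩, hxl2⟩ := hxT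
      -- support of x
      set D : Finset (Fin n) := Finset.univ.filter (fun i => σ i ≠ πs⁻¹ i) with hD
      have hDcard : D.card ≤ m := by
        have hsub : D ⊆ (Finset.univ.filter fun i => σ i ≠ i)
            ∪ (Finset.univ.filter fun i => πs⁻¹ i ≠ i) := by
          intro i hi
          simp only [hD, Finset.mem_filter, Finset.mem_univ, true_and] at hi
          simp only [Finset.mem_union, Finset.mem_filter, Finset.mem_univ, true_and]
          by_contra hcon
          push_neg at hcon
          exact hi (hcon.1.trans hcon.2.symm)
        have heq : (Finset.univ.filter fun i => πs⁻¹ i ≠ i)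
            = (Finset.univ.filter fun i : Fin n => πs i ≠ i) := by
          apply Finset.filter_congr
          intro i _
          simp only [ne_eq, eq_iff_iff]
          rw [Equiv.Perm.inv_eq_iff_eq]
          constructor
          · intro h h'; exact h h'.symm
          · intro h h'; exact h h'.symm
        calc D.card ≤ ((Finset.univ.filter fun i => σ i ≠ i)
              ∪ (Finset.univ.filter fun i => πs⁻¹ i ≠ i)).card := Finset.card_le_card hsub
          _ ≤ (Finset.univ.filter fun i => σ i ≠ i).card
              + (Finset.univ.filter fun i => πs⁻¹ i ≠ i).card := Finset.card_union_le _ _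
          _ ≤ k + k := by
              rw [heq]
              exact Nat.add_le_add hσ hπs
          _ = m := by omega
      obtain ⟨S, hDS, -, hScard⟩ := Finset.exists_subsuperset_card_eq (Finset.subset_univ D)
        hDcard (by simpa using hmn)
      have hSmem : S ∈ 𝒮 := by
        rw [h𝒮, Finset.mem_powersetCard_univ]
        exact hScard
      have hxS : ∀ i, i ∉ S → x i = 0 := by
        intro i hiS
        have hiD : i ∉ D := fun h => hiS (hDS h)
        simp only [hD, Finset.mem_filter, Finset.mem_univ, true_and, not_not] at hiD
        rw [hxv]
        simp [permVec, hiD]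
      have hsum : ∑ i, g i * x i = ∑ i ∈ S, g i * x i := by
        refine (Finset.sum_subset (Finset.subset_univ S) ?_).symm
        intro i _ hi
        rw [hxS i hi, mul_zero]
      have hx2sum : ∑ i, x i ^ 2 = 1 := by
        have := hxl2
        rw [l2, Real.sqrt_eq_one] at this
        exact this
      have hx2 : ∑ i ∈ S, x i ^ 2 ≤ 1 := by
        rw [← hx2sum]
        exact Finset.sum_le_sum_of_subset_of_nonneg (Finset.subset_univ S)
          (fun i _ _ => sq_nonneg _)
      have hcs := Finset.sum_mul_sq_le_sq_mul_sq S (fun i => g i) (fun i => x i)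
      have hXM : X S g ≤ M g := by
        simp only [hM]
        exact Finset.le_sup' (fun S => X S g) hSmem
      calc |∑ i, g i * x i| = Real.sqrt ((∑ i ∈ S, g i * x i) ^ 2) := by
            rw [hsum, Real.sqrt_sq_eq_abs]
        _ ≤ Real.sqrt ((∑ i ∈ S, g i ^ 2) * (∑ i ∈ S, x i ^ 2)) := Real.sqrt_le_sqrt hcs
        _ ≤ Real.sqrt (M g) := by
            apply Real.sqrt_le_sqrt
            calc (∑ i ∈ S, g i ^ 2) * (∑ i ∈ S, x i ^ 2) ≤ X S g * 1 := by
                  apply mul_le_mul_of_nonneg_left hx2 (hXnn S g)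
              _ = X S g := mul_one _
              _ ≤ M g := hXM
    -- Step 2: sqrt (M g) ≤ (M g + B)/(2 sqrt B)
    have hstep2 : Real.sqrt (M g) ≤ (M g + B) / (2 * Real.sqrt B) := by
      rw [le_div_iff₀ (by positivity)]
      nlinarith [sq_nonneg (Real.sqrt (M g) - Real.sqrt B), Real.sq_sqrt hBpos.le,
        Real.sq_sqrt (hMnn g), Real.sqrt_nonneg (M g), Real.sqrt_nonneg B]
    -- Step 3: M g ≤ 4 log (Y g)
    have hstep3 : M g ≤ 4 * Real.log (Y g) := by
      obtain ⟨S₀, hS₀, hEq⟩ := Finset.exists_mem_eq_sup' h𝒮ne (fun S => X S g)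
      have hexp : Real.exp (M g / 4) ≤ Y g := by
        simp only [hM]
        rw [hEq]
        exact Finset.single_le_sum (f := fun S => Real.exp (X S g / 4))
          (fun S _ => (Real.exp_pos _).le) hS₀
      have := (Real.le_log_iff_exp_le (hYpos g)).2 hexp
      linarith
    -- Step 4: log (Y g) ≤ Y g / A + log A - 1
    have hstep4 : Real.log (Y g) ≤ Y g / A + Real.log A - 1 := by
      have h := Real.log_le_sub_one_of_pos (div_pos (hYpos g) hApos)
      rw [Real.log_div (hYpos g).ne' hApos.ne'] at h
      linarith
    -- combine
    have hnum : M g + B ≤ 4 * Y g / A + (2 * B - 4) := by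
      have : M g ≤ 4 * (Y g / A) + 4 * Real.log A - 4 := by nlinarith
      rw [hB] at *
      have h4 : 4 * (Y g / A) = 4 * Y g / A := by ring
      linarith [h4 ▸ this]
    calc sSup ((fun x => |∑ i, g i * x i|) '' setT n k πs) ≤ (M g + B) / (2 * Real.sqrt B) :=
          le_trans hstep1 hstep2
      _ ≤ (4 * Y g / A + (2 * B - 4)) / (2 * Real.sqrt B) := by
          apply div_le_div_of_nonneg_right hnum (by positivity)
  -- integrability and integral of Y
  have hintS : ∀ S ∈ 𝒮, Integrable (fun g => Real.exp (X S g / 4)) (gaussPi n)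
      ∧ ∫ g, Real.exp (X S g / 4) ∂(gaussPi n) = Real.sqrt 2 ^ m := by
    intro S hS
    have hScard : S.card = m := by rwa [h𝒮, Finset.mem_powersetCard_univ] at hS
    set f : Fin n → ℝ → ℝ := fun i x => if i ∈ S then Real.exp (x ^ 2 / 4) else 1 with hf
    have hfun : (fun g : Fin n → ℝ => Real.exp (X S g / 4)) = fun g => ∏ i, f i (g i) := by
      funext g
      rw [hX]
      simp only [hf]
      rw [show (∏ i, if i ∈ S then Real.exp (g i ^ 2 / 4) else 1)
          = ∏ i ∈ Finset.univ ∩ S, Real.exp (g i ^ 2 / 4) from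
        Finset.prod_ite_mem Finset.univ S _, Finset.univ_inter, ← Real.exp_sum,
        Finset.sum_div]
    have hfint : ∀ i, Integrable (f i) stdGaussian := by
      intro i
      by_cases hi : i ∈ S
      · simp only [hf, hi, if_true]
        exact integrable_exp_sq_quarter
      · simp only [hf, hi, if_false]
        exact integrable_const 1
    constructor
    · rw [hfun]
      exact integrable_prod_gaussPi f hfint
    · rw [hfun, integral_prod_gaussPi f]
      have : ∀ i, ∫ x, f i x ∂stdGaussian = if i ∈ S then Real.sqrt 2 else 1 := by
        intro i
        by_cases hi : i ∈ S
        · simp only [hf, hi, if_true]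
          exact integral_exp_sq_quarter
        · simp only [hf, hi, if_false]
          simp
      rw [Finset.prod_congr rfl (fun i _ => this i)]
      rw [show (∏ i, if i ∈ S then Real.sqrt 2 else 1)
          = ∏ _i ∈ Finset.univ ∩ S, Real.sqrt 2 from Finset.prod_ite_mem Finset.univ S _,
        Finset.univ_inter, Finset.prod_const, hScard]
  have hYint : Integrable Y (gaussPi n) := by
    rw [hY]
    exact integrable_finset_sum 𝒮 (fun S hS => (hintS S hS).1)
  have hYval : ∫ g, Y g ∂(gaussPi n) = A := by
    rw [hY, integral_finset_sum 𝒮 (fun S hS => (hintS S hS).1)]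
    rw [Finset.sum_congr rfl (fun S hS => (hintS S hS).2), Finset.sum_const]
    rw [h𝒮, Finset.card_powersetCard, Finset.card_univ, Fintype.card_fin]
    rw [nsmul_eq_mul, hA]
  -- the dominating function is integrable
  have hhint : Integrable (fun g => (4 * Y g / A + (2 * B - 4)) / (2 * Real.sqrt B))
      (gaussPi n) := (((hYint.const_mul 4).div_const A).add (integrable_const _)).div_const _
  -- nonnegativity of the integrand
  have hF0 : ∀ g : Fin n → ℝ, 0 ≤ sSup ((fun x => |∑ i, g i * x i|) '' setT n k πs) := by
    intro g
    apply Real.sSup_nonneg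
    rintro y ⟨x, -, rfl⟩
    exact abs_nonneg _
  -- compute the integral of the dominating function
  have hhval : ∫ g, (4 * Y g / A + (2 * B - 4)) / (2 * Real.sqrt B) ∂(gaussPi n)
      = Real.sqrt B := by
    rw [integral_div, integral_add ((hYint.const_mul 4).div_const A) (integrable_const _)]
    rw [integral_const]
    simp only [probReal_univ, one_smul]
    rw [show (fun g => 4 * Y g / A) = fun g => (4 / A) * Y g by funext g; ring]
    rw [integral_const_mul, hYval]
    rw [show 4 / A * A + (2 * B - 4) = 2 * B by field_simp; ring]
    rw [show 2 * B / (2 * Real.sqrt B) = B / Real.sqrt B by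
      rw [mul_div_mul_left _ _ (two_ne_zero)]]
    exact Real.div_sqrt
  -- main integral inequality
  have hmain : gwidth (setT n k πs) ≤ Real.sqrt B := by
    rw [gwidth, ← hhval]
    exact integral_mono_of_nonneg (Filter.Eventually.of_forall hF0) hhint
      (Filter.Eventually.of_forall hpt)
  -- final numeric bound
  have hlogA : Real.log A = Real.log (n.choose m : ℝ) + m * (Real.log 2 / 2) := by
    rw [hA, Real.log_mul (by positivity) (by positivity), Real.log_pow,
      Real.log_sqrt (by norm_num)]
  have hchooseL : Real.log (n.choose m : ℝ) ≤ m * L := by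
    have h1 : (n.choose m : ℝ) ≤ (n : ℝ) ^ m / m.factorial := Nat.choose_le_pow_div m n
    have h2 : ((m : ℝ)) ^ m / m.factorial ≤ Real.exp m := Real.pow_div_factorial_le_exp (x := (m:ℝ))
      (by positivity) m
    have hfac : (0:ℝ) < m.factorial := by exact_mod_cast m.factorial_pos
    have h3 : (n : ℝ) ^ m / m.factorial ≤ (Real.exp 1 * n / (2 * (k:ℝ))) ^ m := by
      rw [div_pow, mul_pow, ← hmR, Real.exp_one_pow]
      rw [div_le_div_iff₀ hfac (by positivity)]
      calc (n:ℝ) ^ m * (m:ℝ) ^ m = (m:ℝ) ^ m * (n:ℝ) ^ m := by ring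
        _ ≤ (Real.exp m * m.factorial) * (n:ℝ) ^ m := by
            apply mul_le_mul_of_nonneg_right _ (by positivity)
            rw [← div_le_iff₀ hfac] at *
            exact h2
        _ = Real.exp m * (n:ℝ) ^ m * m.factorial := by ring
    have h4 : (n.choose m : ℝ) ≤ (Real.exp 1 * n / (2 * (k:ℝ))) ^ m := le_trans h1 h3
    calc Real.log (n.choose m : ℝ) ≤ Real.log ((Real.exp 1 * n / (2 * (k:ℝ))) ^ m) :=
          Real.log_le_log (by positivity) h4
      _ = m * L := by rw [Real.log_pow, hLdef]
  have hlog2 := Real.log_two_lt_d9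
  have hlog2pos := Real.log_pos (by norm_num : (1:ℝ) < 2)
  have hBle : B ≤ 12.25 * (2 * (k:ℝ) * L) := by
    rw [hB, hlogA, ← hmR]
    have h5 : 2 * (m:ℝ) * Real.log 2 ≤ 2 * (m:ℝ) * (0.6931471808 * L) := by
      apply mul_le_mul_of_nonneg_left _ (by positivity)
      nlinarith [hlog2, hL1, hlog2pos]
    have hmL : (0:ℝ) < (m:ℝ) * L := mul_pos hmpos (lt_of_lt_of_le zero_lt_one hL1)
    have h6 : 4 * ((m:ℝ) * L) + 2 * (m:ℝ) * (0.6931471808 * L) ≤ 12.25 * ((m:ℝ) * L) := by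
      nlinarith [hmL]
    linarith [hchooseL, h5, h6]
  calc gwidth (setT n k πs) ≤ Real.sqrt B := hmain
    _ ≤ Real.sqrt (12.25 * (2 * (k:ℝ) * L)) := Real.sqrt_le_sqrt hBle
    _ = 3.5 * Real.sqrt (2 * (k:ℝ) * L) := by
        rw [show (12.25:ℝ) = 3.5 ^ 2 by norm_num, Real.sqrt_mul (by positivity),
          Real.sqrt_sq (by norm_num)]

end
end

section
/- Let P be an orthogonal projection matrix on ℝⁿ, let e* ∈ ℝⁿ be supported on S ⊆ {1,…,n} (i.e., e*_i = 0 for i ∉ S), let ε ∈ ℝⁿ, λ > 0, and set z := √n·e* + ε. Let ẽ be any minimizer over e ∈ ℝⁿ of (1/n)·‖P(z − √n·e)‖₂² + λ‖e‖₁. If λ ≥ 4·‖Pε‖_∞/√n, then ‖(ẽ − e*)_{Sᶜ}‖₁ ≤ 3·‖(ẽ − e*)_S‖₁. -/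
open Matrix

noncomputable section

def l1 {n : ℕ} (v : Fin n → ℝ) : ℝ := ∑ i, |v i|

/-- **Cone condition for the ℓ₁-penalized projected least squares.**
Let `P` be an orthogonal projection matrix (`P = Pᵀ = P²`), `e*` supported on `S`,
`z = √n e* + ε`, and let `ẽ` minimize `(1/n)‖P(z - √n e)‖₂² + λ‖e‖₁`.  If
`λ ≥ 4‖Pε‖_∞/√n` then `‖(ẽ - e*)_{Sᶜ}‖₁ ≤ 3‖(ẽ - e*)_S‖₁`. -/
theorem lasso_cone_condition (n : ℕ) (P : Matrix (Fin n) (Fin n) ℝ)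
    (hPsym : Pᵀ = P) (hPidem : P * P = P)
    (S : Finset (Fin n)) (estar εv : Fin n → ℝ)
    (hsupp : ∀ i, i ∉ S → estar i = 0)
    (lam : ℝ) (hlam : 0 < lam)
    (hlam2 : ∀ i, 4 * |(P *ᵥ εv) i| / Real.sqrt n ≤ lam)
    (et : Fin n → ℝ)
    (hmin : ∀ e : Fin n → ℝ,
        (1 / (n : ℝ)) * l2 (P *ᵥ ((Real.sqrt n • estar + εv) - Real.sqrt n • et)) ^ 2
            + lam * l1 et ≤
        (1 / (n : ℝ)) * l2 (P *ᵥ ((Real.sqrt n • estar + εv) - Real.sqrt n • e)) ^ 2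
            + lam * l1 e) :
    (∑ i ∈ Sᶜ, |et i - estar i|) ≤ 3 * ∑ i ∈ S, |et i - estar i| := by
  rcases Nat.eq_zero_or_pos n with hn | hn
  · subst hn
    rw [Finset.eq_empty_of_isEmpty Sᶜ, Finset.eq_empty_of_isEmpty S]
    simp
  set c := Real.sqrt n with hcdef
  have hc : 0 < c := Real.sqrt_pos.mpr (by exact_mod_cast hn)
  have hc2 : c ^ 2 = n := Real.sq_sqrt (by positivity)
  set a := P *ᵥ εv with ha
  set hv : Fin n → ℝ := et - estar with hhv
  set b := P *ᵥ hv with hb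
  have hsq : ∀ v : Fin n → ℝ, l2 v ^ 2 = ∑ i, v i ^ 2 := by
    intro v
    unfold l2
    rw [Real.sq_sqrt]
    positivity
  have h1 : (c • estar + εv) - c • et = εv - c • hv := by
    funext i; simp [hhv, smul_eq_mul]; ring
  have h2 : P *ᵥ ((c • estar + εv) - c • et) = a - c • b := by
    rw [h1, Matrix.mulVec_sub, Matrix.mulVec_smul]
  have h3 : (c • estar + εv) - c • estar = εv := by funext i; simp
  have key := hmin estar
  rw [h2, h3, hsq, hsq, ← ha] at key
  -- dot product identity
  have hvec : a ᵥ* P = a := by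
    calc a ᵥ* P = Pᵀ *ᵥ a := (Matrix.mulVec_transpose P a).symm
      _ = P *ᵥ a := by rw [hPsym]
      _ = (P * P) *ᵥ εv := by rw [ha, Matrix.mulVec_mulVec]
      _ = a := by rw [hPidem, ha]
  have hdot : ∑ i, a i * b i = ∑ i, a i * hv i := by
    have h := Matrix.dotProduct_mulVec a P hv
    rw [hvec] at h
    simpa [dotProduct, hb] using h
  -- expansion
  have expand : ∑ i, (a i - c • b i) ^ 2
      = (∑ i, a i ^ 2) - 2 * c * (∑ i, a i * b i) + c ^ 2 * ∑ i, b i ^ 2 := by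
    have e1 : ∀ i ∈ Finset.univ, (a i - c • b i) ^ 2
        = a i ^ 2 - 2 * c * (a i * b i) + c ^ 2 * b i ^ 2 := by
      intro i _; simp [smul_eq_mul]; ring
    rw [Finset.sum_congr rfl e1]
    rw [Finset.sum_add_distrib, Finset.sum_sub_distrib, ← Finset.mul_sum, ← Finset.mul_sum]
  have hPiapp : ∀ i, (a - c • b) i = a i - c • b i := fun i => rfl
  simp only [hPiapp] at key
  rw [expand, hdot] at key
  have hnpos : (0 : ℝ) < n := by exact_mod_cast hn
  set D := ∑ i, a i * hv i with hD
  set Q := ∑ i, b i ^ 2 with hQ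
  have hQ0 : 0 ≤ Q := by positivity
  -- from key: (1/n)*(-2cD + c²Q) ≤ lam*(l1 estar - l1 et)
  have key2 : -(2 * c / n) * D ≤ lam * (l1 estar - l1 et) := by
    have : (1 / (n:ℝ)) * ((∑ i, a i ^ 2) - 2 * c * D + c ^ 2 * Q) + lam * l1 et
        ≤ (1 / (n:ℝ)) * (∑ i, a i ^ 2) + lam * l1 estar := key
    have hq : 0 ≤ (1 / (n:ℝ)) * (c ^ 2 * Q) := by positivity
    have h2n : -(2 * c / n) * D = (1/(n:ℝ)) * (-(2*c) * D) := by field_simp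
    nlinarith [this, hq]
  set A := ∑ i ∈ S, |et i - estar i| with hA
  set B := ∑ i ∈ Sᶜ, |et i - estar i| with hB
  have hA0 : 0 ≤ A := Finset.sum_nonneg fun i _ => abs_nonneg _
  have hB0 : 0 ≤ B := Finset.sum_nonneg fun i _ => abs_nonneg _
  -- bound on the cross term
  have hcross : (2 * c / n) * |D| ≤ (lam / 2) * (A + B) := by
    have habs : |D| ≤ ∑ i, |a i| * |hv i| := by
      calc |D| ≤ ∑ i, |a i * hv i| := Finset.abs_sum_le_sum_abs _ _
        _ = ∑ i, |a i| * |hv i| := by simp [abs_mul]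
    have step : (2 * c / n) * ∑ i, |a i| * |hv i| ≤ (lam / 2) * ∑ i, |hv i| := by
      rw [Finset.mul_sum, Finset.mul_sum]
      apply Finset.sum_le_sum
      intro i _
      have hi := hlam2 i
      have h4 : 2 * c / n * |a i| = (4 * |a i| / c) / 2 := by
        rw [← hc2]; field_simp; ring
      rw [← mul_assoc, h4]
      have : (4 * |a i| / c) / 2 ≤ lam / 2 := by linarith
      calc (4 * |a i| / c) / 2 * |hv i| ≤ lam / 2 * |hv i| :=
            mul_le_mul_of_nonneg_right this (abs_nonneg _)
        _ = lam / 2 * |hv i| := rfl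
    have hsum : ∑ i, |hv i| = A + B := by
      rw [hA, hB, Finset.sum_add_sum_compl S fun i => |et i - estar i|]
      rfl
    calc (2 * c / n) * |D| ≤ (2 * c / n) * ∑ i, |a i| * |hv i| :=
          mul_le_mul_of_nonneg_left habs (by positivity)
      _ ≤ (lam / 2) * ∑ i, |hv i| := step
      _ = (lam / 2) * (A + B) := by rw [hsum]
  -- l1 comparison
  have hl1 : l1 estar - l1 et ≤ A - B := by
    have het : l1 et = ∑ i ∈ S, |et i| + ∑ i ∈ Sᶜ, |et i| :=
      (Finset.sum_add_sum_compl S fun i => |et i|).symm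
    have hes : l1 estar = ∑ i ∈ S, |estar i| := by
      rw [show l1 estar = ∑ i ∈ S, |estar i| + ∑ i ∈ Sᶜ, |estar i| from
        (Finset.sum_add_sum_compl S fun i => |estar i|).symm]
      have : ∑ i ∈ Sᶜ, |estar i| = 0 :=
        Finset.sum_eq_zero fun i hi => by
          rw [hsupp i (Finset.mem_compl.mp hi), abs_zero]
      rw [this, add_zero]
    have hS : ∑ i ∈ S, |estar i| - ∑ i ∈ S, |et i| ≤ A := by
      rw [hA, ← Finset.sum_sub_distrib]
      apply Finset.sum_le_sum
      intro i _
      have := abs_sub_abs_le_abs_sub (estar i) (et i)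
      rw [abs_sub_comm] at this
      exact this
    have hSc : ∑ i ∈ Sᶜ, |et i| = B := by
      rw [hB]
      apply Finset.sum_congr rfl
      intro i hi
      rw [hsupp i (Finset.mem_compl.mp hi), sub_zero]
    rw [het, hes]
    linarith
  -- combine
  have hfinal : -(lam / 2) * (A + B) ≤ lam * (A - B) := by
    have h5 : -(2 * c / n) * D ≥ -((2 * c / n) * |D|) := by
      have : -(2 * c / n) * D = -((2 * c / n) * D) := by ring
      rw [this]
      apply neg_le_neg
      exact mul_le_mul_of_nonneg_left (le_abs_self D) (by positivity)
    have h6 : lam * (l1 estar - l1 et) ≤ lam * (A - B) :=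
      mul_le_mul_of_nonneg_left hl1 (le_of_lt hlam)
    linarith [hcross, key2]
  nlinarith [hfinal, hlam]

end
end
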